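/- The polynomial Σ_{k=1}^m ∏_{j=1}^{k−1}(x_r ⊕ y_{a_j}) ∏_{j=k+1}^m (x_{r+1} ⊕ y_{a_j}) − Σ_{k=1}^{m−1} ∏_{j=1}^k (x_r ⊕ y_{a_j}) ∏_{j=k+1}^m (x_{r+1} ⊕ y_{a_j}) is symmetric in x_r and x_{r+1}. -/

import Mathlib

open Finset

/-- `x ⊕ y = x + y − x·y`. -/
def oplus {R : Type*} [CommRing R] (u v : R) : R := u + v - u * v

section Aux
variable {R : Type*} [CommRing R] (y : ℕ → R) (aseq : ℕ → ℕ)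

def Pp (u : R) (n : ℕ) : R := ∏ j ∈ Icc 1 n, oplus u (y (aseq j))

def Ll (m : ℕ) (u v : R) : R :=
  (∑ k ∈ Icc 1 m,
      (∏ j ∈ Icc 1 (k - 1), oplus u (y (aseq j))) *
        ∏ j ∈ Icc (k + 1) m, oplus v (y (aseq j))) -
    ∑ k ∈ Icc 1 (m - 1),
      (∏ j ∈ Icc 1 k, oplus u (y (aseq j))) *
        ∏ j ∈ Icc (k + 1) m, oplus v (y (aseq j))

lemma Ll_rec (n : ℕ) (u v : R) :
    Ll y aseq (n + 2) u v =
      oplus v (y (aseq (n + 2))) * Ll y aseq (n + 1) u v +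
        (1 - oplus v (y (aseq (n + 2)))) * Pp y aseq u (n + 1) := by
  unfold Ll Pp
  have e1 : ∀ k ∈ Icc 1 (n + 1),
      (∏ j ∈ Icc (k + 1) (n + 2), oplus v (y (aseq j))) =
        (∏ j ∈ Icc (k + 1) (n + 1), oplus v (y (aseq j))) * oplus v (y (aseq (n + 2))) := by
    intro k hk
    rw [Finset.prod_Icc_succ_top (by simp at hk; omega)]
  have h21 : n + 2 - 1 = n + 1 := rfl
  have h11 : n + 1 - 1 = n := rfl
  rw [h21, Finset.sum_Icc_succ_top (by omega : 1 ≤ n + 2), h21]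
  have s1 : (∑ k ∈ Icc 1 (n + 1),
      (∏ j ∈ Icc 1 (k - 1), oplus u (y (aseq j))) *
        ∏ j ∈ Icc (k + 1) (n + 2), oplus v (y (aseq j))) =
      ∑ k ∈ Icc 1 (n + 1),
      ((∏ j ∈ Icc 1 (k - 1), oplus u (y (aseq j))) *
        ∏ j ∈ Icc (k + 1) (n + 1), oplus v (y (aseq j))) * oplus v (y (aseq (n + 2))) := by
    refine Finset.sum_congr rfl (fun k hk => ?_)
    rw [e1 k hk, mul_assoc]
  have s2 : (∑ k ∈ Icc 1 (n + 1),
      (∏ j ∈ Icc 1 k, oplus u (y (aseq j))) *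
        ∏ j ∈ Icc (k + 1) (n + 2), oplus v (y (aseq j))) =
      ∑ k ∈ Icc 1 (n + 1),
      ((∏ j ∈ Icc 1 k, oplus u (y (aseq j))) *
        ∏ j ∈ Icc (k + 1) (n + 1), oplus v (y (aseq j))) * oplus v (y (aseq (n + 2))) := by
    refine Finset.sum_congr rfl (fun k hk => ?_)
    rw [e1 k hk, mul_assoc]
  rw [s1, s2, ← Finset.sum_mul, ← Finset.sum_mul,
      Finset.sum_Icc_succ_top (by omega : 1 ≤ n + 1), h11,
      show Icc (n + 2 + 1) (n + 2) = ∅ from Icc_eq_empty (by omega),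
      show Icc (n + 1 + 1) (n + 1) = ∅ from Icc_eq_empty (by omega)]
  simp only [prod_empty, mul_one]
  rw [Finset.sum_Icc_succ_top (by omega : 1 ≤ n + 1),
      show Icc (n + 1 + 1) (n + 1) = ∅ from Icc_eq_empty (by omega)]
  simp only [prod_empty, mul_one]
  ring

lemma Ll_one (u v : R) : Ll y aseq 1 u v = 1 := by
  unfold Ll
  simp

lemma Pp_one (u : R) : Pp y aseq u 1 = oplus u (y (aseq 1)) := by
  unfold Pp; simp

lemma Pp_succ (u : R) (n : ℕ) :
    Pp y aseq u (n + 1) = Pp y aseq u n * oplus u (y (aseq (n + 1))) := by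
  unfold Pp
  rw [Finset.prod_Icc_succ_top (by omega)]

lemma aux_main (u v : R) (n : ℕ) :
    Ll y aseq (n + 1) u v = Ll y aseq (n + 1) v u ∧
      (1 - v) * (Pp y aseq u (n + 1) - Ll y aseq (n + 1) u v) =
        (1 - u) * (Pp y aseq v (n + 1) - Ll y aseq (n + 1) u v) := by
  induction n with
  | zero =>
    rw [Ll_one, Ll_one, Pp_one, Pp_one]
    constructor
    · rfl
    · simp only [oplus]; ring
  | succ n ih =>
    obtain ⟨h1, h2⟩ := ih
    rw [Ll_rec y aseq n u v, Ll_rec y aseq n v u, Pp_succ y aseq u (n + 1),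
        Pp_succ y aseq v (n + 1), ← h1]
    simp only [oplus] at h2 ⊢
    constructor
    · linear_combination (1 - y (aseq (n + 2))) * h2
    · linear_combination (v + y (aseq (n + 2)) - v * y (aseq (n + 2))) * h2

end Aux

theorem stmt12 {R : Type*} [CommRing R] (m : ℕ) (y : ℕ → R) (aseq : ℕ → ℕ)
    (hpos : ∀ j, 0 < aseq j) (u v : R) :
    ((∑ k ∈ Icc 1 m,
        (∏ j ∈ Icc 1 (k - 1), oplus u (y (aseq j))) *
          ∏ j ∈ Icc (k + 1) m, oplus v (y (aseq j))) -
      ∑ k ∈ Icc 1 (m - 1),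
        (∏ j ∈ Icc 1 k, oplus u (y (aseq j))) *
          ∏ j ∈ Icc (k + 1) m, oplus v (y (aseq j)))
    =
    ((∑ k ∈ Icc 1 m,
        (∏ j ∈ Icc 1 (k - 1), oplus v (y (aseq j))) *
          ∏ j ∈ Icc (k + 1) m, oplus u (y (aseq j))) -
      ∑ k ∈ Icc 1 (m - 1),
        (∏ j ∈ Icc 1 k, oplus v (y (aseq j))) *
          ∏ j ∈ Icc (k + 1) m, oplus u (y (aseq j))) := by
  match m with
  | 0 => simp
  | n + 1 => exact (aux_main y aseq u v n).1
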